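/- Under the assumptions that √|V| R(z₀) ∈ B₂ and √|V| R(z₀) √|V| ∈ B₁ for some z₀ in the resolvent set of H, the map z ↦ √|V| R(z) √|V| is trace class for all z in the resolvent set of H and is holomorphic with respect to the trace norm, with derivative √|V| R(z)² √|V|. -/

import Mathlib

open scoped ComplexConjugate ENNReal NNReal
open ContinuousLinearMap

set_option linter.unusedSectionVars false
set_option maxHeartbeats 800000

local notation "⟪" x ", " y "⟫" => @inner ℂ _ _ x y

/-- The Hilbert–Schmidt norm of an operator, computed in a fixed Hilbert basis. -/
noncomputable def hsNorm {𝓗 : Type*} [NormedAddCommGroup 𝓗] [InnerProductSpace ℂ 𝓗]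
    (e : HilbertBasis ℕ ℂ 𝓗) (T : 𝓗 →L[ℂ] 𝓗) : ℝ :=
  Real.sqrt (∑' n, ‖T (e n)‖ ^ 2)

/-- `T` is Hilbert–Schmidt (w.r.t. the basis `e`; this is basis-independent). -/
def IsHS {𝓗 : Type*} [NormedAddCommGroup 𝓗] [InnerProductSpace ℂ 𝓗]
    (e : HilbertBasis ℕ ℂ 𝓗) (T : 𝓗 →L[ℂ] 𝓗) : Prop :=
  Summable (fun n => ‖T (e n)‖ ^ 2)

/-- `T` is trace class: it factors as a product of two Hilbert–Schmidt operators. -/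
def IsTraceClass {𝓗 : Type*} [NormedAddCommGroup 𝓗] [InnerProductSpace ℂ 𝓗]
    (e : HilbertBasis ℕ ℂ 𝓗) (T : 𝓗 →L[ℂ] 𝓗) : Prop :=
  ∃ A B : 𝓗 →L[ℂ] 𝓗, IsHS e A ∧ IsHS e B ∧ T = A * B

/-- The trace norm, characterized as the infimum of `‖A‖₂ ‖B‖₂` over factorizations `T = A B`
into Hilbert–Schmidt operators. -/
noncomputable def traceNorm {𝓗 : Type*} [NormedAddCommGroup 𝓗] [InnerProductSpace ℂ 𝓗]
    (e : HilbertBasis ℕ ℂ 𝓗) (T : 𝓗 →L[ℂ] 𝓗) : ℝ :=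
  sInf {c : ℝ | ∃ A B : 𝓗 →L[ℂ] 𝓗, IsHS e A ∧ IsHS e B ∧ T = A * B ∧
    c = hsNorm e A * hsNorm e B}


section aux

variable {𝓗 : Type*} [NormedAddCommGroup 𝓗] [InnerProductSpace ℂ 𝓗] [CompleteSpace 𝓗]

lemma parseval (e : HilbertBasis ℕ ℂ 𝓗) (x : 𝓗) :
    HasSum (fun m => ‖⟪e m, x⟫‖ ^ 2) (‖x‖ ^ 2) := by
  have h := e.hasSum_inner_mul_inner x x
  have h2 := h.mapL Complex.reCLM
  have h3 : ∀ m, (⟪x, e m⟫ * ⟪e m, x⟫).re = ‖⟪e m, x⟫‖ ^ 2 := by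
    intro m
    have h5 : ⟪x, e m⟫ = conj ⟪e m, x⟫ := by rw [← inner_conj_symm]
    rw [h5, mul_comm, Complex.mul_conj]
    simp [Complex.normSq_eq_norm_sq, ← Complex.ofReal_pow]
  have h4 : (⟪x, x⟫).re = ‖x‖ ^ 2 := by
    simpa using (inner_self_eq_norm_sq (𝕜 := ℂ) x)
  simp only [Complex.reCLM_apply, h3, h4] at h2
  exact h2

set_option linter.unusedSectionVars false

set_option linter.unusedSectionVars false
set_option maxHeartbeats 800000
open scoped NNReal



/-- ENNReal-valued HS quantity. -/
noncomputable def hsF (e : HilbertBasis ℕ ℂ 𝓗) (T : 𝓗 →L[ℂ] 𝓗) : ℝ≥0∞ :=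
  ∑' n, ENNReal.ofReal (‖T (e n)‖ ^ 2)

lemma ofReal_norm_sq (x : 𝓗) : ENNReal.ofReal (‖x‖ ^ 2) = ((‖x‖₊ ^ 2 : ℝ≥0) : ℝ≥0∞) := by
  rw [← ENNReal.ofReal_coe_nnreal]
  congr 1

lemma isHS_iff_hsF (e : HilbertBasis ℕ ℂ 𝓗) (T : 𝓗 →L[ℂ] 𝓗) :
    IsHS e T ↔ hsF e T ≠ ∞ := by
  rw [hsF]
  simp_rw [ofReal_norm_sq]
  rw [ENNReal.tsum_coe_ne_top_iff_summable, IsHS, ← NNReal.summable_coe]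
  apply summable_congr
  intro n
  push_cast [coe_nnnorm]
  rfl

lemma hsF_star (e : HilbertBasis ℕ ℂ 𝓗) (T : 𝓗 →L[ℂ] 𝓗) :
    hsF e (star T) = hsF e T := by
  have key : ∀ S : 𝓗 →L[ℂ] 𝓗, hsF e S = ∑' n, ∑' m, ENNReal.ofReal (‖⟪e m, S (e n)⟫‖ ^ 2) := by
    intro S
    rw [hsF]
    congr 1; funext n
    rw [← (parseval e (S (e n))).tsum_eq,
      ENNReal.ofReal_tsum_of_nonneg (fun m => by positivity) (parseval e (S (e n))).summable]
  rw [key, key]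
  have h1 : ∀ n m : ℕ, ‖⟪e m, (star T) (e n)⟫‖ = ‖⟪e n, T (e m)⟫‖ := by
    intro n m
    have : ⟪e m, (star T) (e n)⟫ = conj ⟪e n, T (e m)⟫ := by
      rw [← inner_conj_symm, star_eq_adjoint, adjoint_inner_left]
    rw [this, RCLike.norm_conj]
  simp_rw [h1]
  exact ENNReal.tsum_comm

lemma isHS_star {e : HilbertBasis ℕ ℂ 𝓗} {T : 𝓗 →L[ℂ] 𝓗} (h : IsHS e T) :
    IsHS e (star T) := by
  rw [isHS_iff_hsF] at h ⊢
  rwa [hsF_star]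

lemma isHS_comp_left {e : HilbertBasis ℕ ℂ 𝓗} {T : 𝓗 →L[ℂ] 𝓗} (h : IsHS e T)
    (C : 𝓗 →L[ℂ] 𝓗) : IsHS e (C * T) := by
  refine Summable.of_nonneg_of_le (fun n => by positivity) (fun n => ?_) (h.mul_left (‖C‖ ^ 2))
  calc ‖(C * T) (e n)‖ ^ 2 ≤ (‖C‖ * ‖T (e n)‖) ^ 2 :=
        pow_le_pow_left₀ (norm_nonneg _) (C.le_opNorm _) 2
    _ = ‖C‖ ^ 2 * ‖T (e n)‖ ^ 2 := mul_pow _ _ _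

lemma isHS_comp_right {e : HilbertBasis ℕ ℂ 𝓗} {T : 𝓗 →L[ℂ] 𝓗} (h : IsHS e T)
    (C : 𝓗 →L[ℂ] 𝓗) : IsHS e (T * C) := by
  have h2 : T * C = star (star C * star T) := by simp [star_mul]
  rw [h2]
  exact isHS_star (isHS_comp_left (isHS_star h) (star C))

lemma isHS_add {e : HilbertBasis ℕ ℂ 𝓗} {T S : 𝓗 →L[ℂ] 𝓗} (hT : IsHS e T) (hS : IsHS e S) :
    IsHS e (T + S) := by
  refine Summable.of_nonneg_of_le (fun n => by positivity) (fun n => ?_)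
    (((hT.mul_left 2).add (hS.mul_left 2)))
  have h1 : ‖(T + S) (e n)‖ ≤ ‖T (e n)‖ + ‖S (e n)‖ := norm_add_le _ _
  have h2 : (0:ℝ) ≤ ‖(T + S) (e n)‖ := norm_nonneg _
  nlinarith [sq_nonneg (‖T (e n)‖ - ‖S (e n)‖)]

lemma isHS_smul {e : HilbertBasis ℕ ℂ 𝓗} {T : 𝓗 →L[ℂ] 𝓗} (h : IsHS e T) (c : ℂ) :
    IsHS e (c • T) := by
  have h2 : c • T = (c • (1 : 𝓗 →L[ℂ] 𝓗)) * T := by rw [smul_mul_assoc, one_mul]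
  rw [h2]
  exact isHS_comp_left h _

lemma hsNorm_nonneg (e : HilbertBasis ℕ ℂ 𝓗) (T : 𝓗 →L[ℂ] 𝓗) : 0 ≤ hsNorm e T :=
  Real.sqrt_nonneg _

lemma hsNorm_comp_left_le {e : HilbertBasis ℕ ℂ 𝓗} {T : 𝓗 →L[ℂ] 𝓗} (h : IsHS e T)
    (C : 𝓗 →L[ℂ] 𝓗) : hsNorm e (C * T) ≤ ‖C‖ * hsNorm e T := by
  rw [hsNorm, hsNorm, ← Real.sqrt_sq (norm_nonneg C), ← Real.sqrt_mul (by positivity)]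
  apply Real.sqrt_le_sqrt
  rw [← tsum_mul_left]
  refine Summable.tsum_le_tsum (fun n => ?_) (isHS_comp_left h C) (h.mul_left _)
  calc ‖(C * T) (e n)‖ ^ 2 ≤ (‖C‖ * ‖T (e n)‖) ^ 2 :=
        pow_le_pow_left₀ (norm_nonneg _) (C.le_opNorm _) 2
    _ = ‖C‖ ^ 2 * ‖T (e n)‖ ^ 2 := mul_pow _ _ _



lemma traceNorm_nonneg (e : HilbertBasis ℕ ℂ 𝓗) (T : 𝓗 →L[ℂ] 𝓗) : 0 ≤ traceNorm e T := by
  apply Real.sInf_nonneg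
  rintro x ⟨A, B, -, -, -, rfl⟩
  exact mul_nonneg (hsNorm_nonneg e A) (hsNorm_nonneg e B)

lemma traceNorm_le_of_fac {e : HilbertBasis ℕ ℂ 𝓗} {T A B : 𝓗 →L[ℂ] 𝓗}
    (hA : IsHS e A) (hB : IsHS e B) (hT : T = A * B) :
    traceNorm e T ≤ hsNorm e A * hsNorm e B := by
  refine csInf_le ⟨0, ?_⟩ ⟨A, B, hA, hB, hT, rfl⟩
  rintro x ⟨A', B', -, -, -, rfl⟩
  exact mul_nonneg (hsNorm_nonneg e A') (hsNorm_nonneg e B')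

section shift

variable (e : HilbertBasis ℕ ℂ 𝓗)

/-- The isometry sending `e n` to `e (f n)` for injective `f`. -/
noncomputable def shiftIso (f : ℕ → ℕ) (hf : Function.Injective f) : 𝓗 →L[ℂ] 𝓗 :=
  ((((e.orthonormal.comp f hf).orthogonalFamily).linearIsometry).comp
    e.repr.toLinearIsometry).toContinuousLinearMap

lemma shift_hasSum (f : ℕ → ℕ) (hf : Function.Injective f) (x : 𝓗) :
    HasSum (fun n => e.repr x n • e (f n)) (shiftIso e f hf x) := by
  have h := ((e.orthonormal.comp f hf).orthogonalFamily).hasSum_linearIsometry (e.repr x)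
  simp only [LinearIsometry.toSpanSingleton_apply] at h
  exact h

lemma inner_shift (f : ℕ → ℕ) (hf : Function.Injective f) (a x : 𝓗) :
    ⟪a, shiftIso e f hf x⟫ = ∑' n, e.repr x n * ⟪a, e (f n)⟫ := by
  have h := (shift_hasSum e f hf x).mapL (innerSL ℂ a)
  simpa [inner_smul_right] using h.tsum_eq.symm

lemma shift_inner_shift (f : ℕ → ℕ) (hf : Function.Injective f) (x y : 𝓗) :
    ⟪shiftIso e f hf x, shiftIso e f hf y⟫ = ⟪x, y⟫ :=
  LinearIsometry.inner_map_map _ x y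

lemma inner_basis_shift_eq_zero (f : ℕ → ℕ) (hf : Function.Injective f) (k : ℕ)
    (hk : ∀ n, k ≠ f n) (x : 𝓗) : ⟪e k, shiftIso e f hf x⟫ = 0 := by
  rw [inner_shift]
  have : ∀ n, e.repr x n * ⟪e k, e (f n)⟫ = 0 := by
    intro n
    rw [e.orthonormal.2 (hk n), mul_zero]
  rw [tsum_congr this, tsum_zero]

lemma shift_inner_shift_eq_zero (f g : ℕ → ℕ) (hf : Function.Injective f)
    (hg : Function.Injective g) (hdisj : ∀ m n, g m ≠ f n) (x y : 𝓗) :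
    ⟪shiftIso e f hf x, shiftIso e g hg y⟫ = 0 := by
  rw [inner_shift]
  have : ∀ m, e.repr y m * ⟪shiftIso e f hf x, e (g m)⟫ = 0 := by
    intro m
    have h1 : ⟪shiftIso e f hf x, e (g m)⟫ = conj ⟪e (g m), shiftIso e f hf x⟫ := by
      rw [inner_conj_symm]
    rw [h1, inner_basis_shift_eq_zero e f hf (g m) (hdisj m) x, map_zero, mul_zero]
  rw [tsum_congr this, tsum_zero]

lemma star_shift_mul_shift (f : ℕ → ℕ) (hf : Function.Injective f) :
    star (shiftIso e f hf) * shiftIso e f hf = 1 := by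
  ext x
  apply ext_inner_left ℂ
  intro y
  rw [ContinuousLinearMap.mul_apply, star_eq_adjoint, ContinuousLinearMap.adjoint_inner_right,
    shift_inner_shift]
  simp

lemma star_shift_mul_shift_eq_zero (f g : ℕ → ℕ) (hf : Function.Injective f)
    (hg : Function.Injective g) (hdisj : ∀ m n, g m ≠ f n) :
    star (shiftIso e f hf) * shiftIso e g hg = 0 := by
  ext x
  apply ext_inner_left ℂ
  intro y
  rw [ContinuousLinearMap.mul_apply, star_eq_adjoint, ContinuousLinearMap.adjoint_inner_right,
    shift_inner_shift_eq_zero e f g hf hg hdisj]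
  simp

end shift

lemma isTraceClass_add {e : HilbertBasis ℕ ℂ 𝓗} {T₁ T₂ : 𝓗 →L[ℂ] 𝓗}
    (h₁ : IsTraceClass e T₁) (h₂ : IsTraceClass e T₂) : IsTraceClass e (T₁ + T₂) := by
  obtain ⟨A₁, B₁, hA₁, hB₁, rfl⟩ := h₁
  obtain ⟨A₂, B₂, hA₂, hB₂, rfl⟩ := h₂
  have hf : Function.Injective (fun n : ℕ => 2 * n) := by intro a b h; simp at h; omega
  have hg : Function.Injective (fun n : ℕ => 2 * n + 1) := by intro a b h; simp at h; omega
  set S₀ := shiftIso e _ hf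
  set S₁ := shiftIso e _ hg
  have h00 : star S₀ * S₀ = 1 := star_shift_mul_shift e _ hf
  have h11 : star S₁ * S₁ = 1 := star_shift_mul_shift e _ hg
  have h01 : star S₀ * S₁ = 0 :=
    star_shift_mul_shift_eq_zero e _ _ hf hg (fun m n => by omega)
  have h10 : star S₁ * S₀ = 0 :=
    star_shift_mul_shift_eq_zero e _ _ hg hf (fun m n => by omega)
  refine ⟨A₁ * star S₀ + A₂ * star S₁, S₀ * B₁ + S₁ * B₂,
    isHS_add (isHS_comp_right hA₁ _) (isHS_comp_right hA₂ _),
    isHS_add (isHS_comp_left hB₁ _) (isHS_comp_left hB₂ _), ?_⟩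
  have r00 : star S₀ * (S₀ * B₁) = B₁ := by rw [← mul_assoc, h00, one_mul]
  have r01 : star S₀ * (S₁ * B₂) = 0 := by rw [← mul_assoc, h01, zero_mul]
  have r10 : star S₁ * (S₀ * B₁) = 0 := by rw [← mul_assoc, h10, zero_mul]
  have r11 : star S₁ * (S₁ * B₂) = B₂ := by rw [← mul_assoc, h11, one_mul]
  simp [mul_add, add_mul, mul_assoc, r00, r01, r10, r11]

section resolventFacts

variable {H : 𝓗 →L[ℂ] 𝓗} {z w : ℂ}

lemma res_mul_eq_one (hz : z ∈ resolventSet ℂ H) :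
    resolvent H z * (algebraMap ℂ (𝓗 →L[ℂ] 𝓗) z - H) = 1 := by
  have h := hz.unit.inv_mul
  rwa [hz.unit_spec, ← spectrum.resolvent_eq hz] at h

lemma mul_res_eq_one (hz : z ∈ resolventSet ℂ H) :
    (algebraMap ℂ (𝓗 →L[ℂ] 𝓗) z - H) * resolvent H z = 1 := by
  have h := hz.unit.mul_inv
  rwa [hz.unit_spec, ← spectrum.resolvent_eq hz] at h

lemma res_id (hz : z ∈ resolventSet ℂ H) (hw : w ∈ resolventSet ℂ H) :
    resolvent H z - resolvent H w = (w - z) • (resolvent H z * resolvent H w) := by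
  have h1 := res_mul_eq_one hz
  have h2 := mul_res_eq_one hw
  have key : resolvent H z * ((algebraMap ℂ (𝓗 →L[ℂ] 𝓗) w - H)
        - (algebraMap ℂ (𝓗 →L[ℂ] 𝓗) z - H)) * resolvent H w
      = resolvent H z * ((algebraMap ℂ (𝓗 →L[ℂ] 𝓗) w - H) * resolvent H w)
        - (resolvent H z * (algebraMap ℂ (𝓗 →L[ℂ] 𝓗) z - H)) * resolvent H w := by
    noncomm_ring
  calc resolvent H z - resolvent H w
      = resolvent H z * ((algebraMap ℂ (𝓗 →L[ℂ] 𝓗) w - H)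
          - (algebraMap ℂ (𝓗 →L[ℂ] 𝓗) z - H)) * resolvent H w := by
        rw [key, h2, h1, mul_one, one_mul]
    _ = (w - z) • (resolvent H z * resolvent H w) := by
        rw [sub_sub_sub_cancel_right, ← map_sub, Algebra.algebraMap_eq_smul_one]
        rw [mul_smul_comm, smul_mul_assoc, mul_one]

lemma res_comm (hz : z ∈ resolventSet ℂ H) (hw : w ∈ resolventSet ℂ H) :
    resolvent H z * resolvent H w = resolvent H w * resolvent H z := by
  rcases eq_or_ne z w with rfl | hne
  · rfl
  · have h1 := res_id hz hw
    have h2 := res_id hw hz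
    have h3 : (w - z) • (resolvent H z * resolvent H w)
        = (w - z) • (resolvent H w * resolvent H z) := by
      rw [← h1]
      have : resolvent H w - resolvent H z = (z - w) • (resolvent H w * resolvent H z) := h2
      have h4 : resolvent H z - resolvent H w
          = -((z - w) • (resolvent H w * resolvent H z)) := by rw [← this]; abel
      rw [h4, ← neg_smul, neg_sub]
    exact smul_right_injective _ (sub_ne_zero.mpr (Ne.symm hne)) h3

lemma res_factor (hz : z ∈ resolventSet ℂ H) (hw : w ∈ resolventSet ℂ H) :
    resolvent H w = resolvent H z * (1 + (z - w) • resolvent H w) := by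
  rw [mul_add, mul_one, mul_smul_comm, res_comm hz hw, ← res_id hw hz]
  abel

lemma star_mem_res (hH : IsSelfAdjoint H) (hz : z ∈ resolventSet ℂ H) :
    (starRingEnd ℂ) z ∈ resolventSet ℂ H := by
  have : (starRingEnd ℂ) z = star z := rfl
  rw [this, spectrum.star_mem_resolventSet_iff, hH.star_eq]
  exact hz

lemma star_res (hH : IsSelfAdjoint H) :
    star (resolvent H z) = resolvent H ((starRingEnd ℂ) z) := by
  have h1 : (starRingEnd ℂ) z = star z := rfl
  rw [h1, resolvent, resolvent, ← Ring.inverse_star]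
  congr 1
  rw [star_sub, hH.star_eq, ← algebraMap_star_comm]

end resolventFacts

end aux

/-- If `√|V| R(z₀)` is Hilbert–Schmidt and `√|V| R(z₀) √|V|` is trace class for
some `z₀` in the resolvent set of `H`, then `√|V| R(z) √|V|` is trace class for all `z` in the
resolvent set and `z ↦ √|V| R(z) √|V|` is holomorphic in trace norm, the difference quotient
`(√|V| R(w) √|V| − √|V| R(z) √|V|)/(z − w)` converging to `√|V| R(z)² √|V|`. -/
theorem stmt3 {𝓗 : Type*} [NormedAddCommGroup 𝓗] [InnerProductSpace ℂ 𝓗] [CompleteSpace 𝓗]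
    (H V sqrtV J : 𝓗 →L[ℂ] 𝓗)
    (hH : IsSelfAdjoint H) (hV : IsSelfAdjoint V) (hsV : IsSelfAdjoint sqrtV)
    (hJ : IsSelfAdjoint J) (hJ2 : J * J = 1) (hfac : V = sqrtV * J * sqrtV)
    (e : HilbertBasis ℕ ℂ 𝓗)
    (z₀ : ℂ) (hz₀ : z₀ ∈ resolventSet ℂ H)
    (h0 : IsHS e (sqrtV * resolvent H z₀))
    (h1 : IsTraceClass e (sqrtV * resolvent H z₀ * sqrtV)) :
    ∀ z ∈ resolventSet ℂ H,
      IsTraceClass e (sqrtV * resolvent H z * sqrtV) ∧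
      Filter.Tendsto
        (fun w : ℂ => traceNorm e ((z - w)⁻¹ •
            (sqrtV * resolvent H w * sqrtV - sqrtV * resolvent H z * sqrtV)
          - sqrtV * resolvent H z * resolvent H z * sqrtV))
        (nhdsWithin z (resolventSet ℂ H \ {z})) (nhds 0) := by
  intro z hz
  -- `sqrtV * R w` is HS for every `w` in the resolvent set
  have hHS : ∀ w ∈ resolventSet ℂ H, IsHS e (sqrtV * resolvent H w) := by
    intro w hw
    have hf : sqrtV * resolvent H w
        = (sqrtV * resolvent H z₀) * (1 + (z₀ - w) • resolvent H w) := by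
      rw [mul_assoc, ← res_factor hz₀ hw]
    rw [hf]
    exact isHS_comp_right h0 _
  -- `R w * sqrtV` is HS for every `w` in the resolvent set
  have hHS' : ∀ w ∈ resolventSet ℂ H, IsHS e (resolvent H w * sqrtV) := by
    intro w hw
    have hst : resolvent H w * sqrtV = star (sqrtV * resolvent H (starRingEnd ℂ w)) := by
      rw [star_mul, ← star_res hH]
      rw [star_star, hsV.star_eq]
    rw [hst]
    exact isHS_star (hHS _ (star_mem_res hH hw))
  constructor
  · -- trace class
    have hsub : sqrtV * resolvent H z * sqrtV - sqrtV * resolvent H z₀ * sqrtV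
        = ((z₀ - z) • (sqrtV * resolvent H z)) * (resolvent H z₀ * sqrtV) := by
      have d := res_id hz hz₀
      calc sqrtV * resolvent H z * sqrtV - sqrtV * resolvent H z₀ * sqrtV
          = sqrtV * (resolvent H z - resolvent H z₀) * sqrtV := by noncomm_ring
        _ = sqrtV * ((z₀ - z) • (resolvent H z * resolvent H z₀)) * sqrtV := by rw [d]
        _ = ((z₀ - z) • (sqrtV * resolvent H z)) * (resolvent H z₀ * sqrtV) := by
            simp [smul_mul_assoc, mul_smul_comm, mul_assoc]
    have key1 : sqrtV * resolvent H z * sqrtV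
        = sqrtV * resolvent H z₀ * sqrtV
          + ((z₀ - z) • (sqrtV * resolvent H z)) * (resolvent H z₀ * sqrtV) :=
      sub_eq_iff_eq_add'.mp hsub
    rw [key1]
    exact isTraceClass_add h1
      ⟨_, _, isHS_smul (hHS z hz) _, hHS' z₀ hz₀, rfl⟩
  · -- holomorphy
    set C : ℂ → (𝓗 →L[ℂ] 𝓗) :=
      fun w => (z - w) • ((1 + (z - w) • resolvent H w) * resolvent H z) with hC
    have hA : IsHS e (sqrtV * resolvent H z) := hHS z hz
    have hK : IsHS e (resolvent H z * sqrtV) := hHS' z hz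
    have hfacQ : ∀ w ∈ resolventSet ℂ H, w ≠ z →
        (z - w)⁻¹ • (sqrtV * resolvent H w * sqrtV - sqrtV * resolvent H z * sqrtV)
          - sqrtV * resolvent H z * resolvent H z * sqrtV
        = (sqrtV * resolvent H z) * (C w * (resolvent H z * sqrtV)) := by
      intro w hw hne
      have hzw : z - w ≠ 0 := sub_ne_zero.mpr (Ne.symm hne)
      have d := res_id hw hz
      have step1 : sqrtV * resolvent H w * sqrtV - sqrtV * resolvent H z * sqrtV
          = (z - w) • (sqrtV * (resolvent H w * resolvent H z) * sqrtV) := by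
        calc sqrtV * resolvent H w * sqrtV - sqrtV * resolvent H z * sqrtV
            = sqrtV * (resolvent H w - resolvent H z) * sqrtV := by noncomm_ring
          _ = sqrtV * ((z - w) • (resolvent H w * resolvent H z)) * sqrtV := by rw [d]
          _ = (z - w) • (sqrtV * (resolvent H w * resolvent H z) * sqrtV) := by
              simp [smul_mul_assoc, mul_smul_comm]
      rw [step1, smul_smul, inv_mul_cancel₀ hzw, one_smul]
      have step5 := res_factor hz hw
      calc sqrtV * (resolvent H w * resolvent H z) * sqrtV
            - sqrtV * resolvent H z * resolvent H z * sqrtV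
          = sqrtV * ((resolvent H w - resolvent H z) * resolvent H z) * sqrtV := by noncomm_ring
        _ = sqrtV * (((z - w) • (resolvent H w * resolvent H z)) * resolvent H z) * sqrtV := by
            rw [d]
        _ = (z - w) • (sqrtV * (resolvent H w * (resolvent H z * resolvent H z)) * sqrtV) := by
            simp [smul_mul_assoc, mul_smul_comm, mul_assoc]
        _ = (z - w) • (sqrtV * ((resolvent H z * (1 + (z - w) • resolvent H w))
              * (resolvent H z * resolvent H z)) * sqrtV) := by rw [← step5]
        _ = (sqrtV * resolvent H z) * (C w * (resolvent H z * sqrtV)) := by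
            rw [hC]
            simp only [smul_mul_assoc, mul_smul_comm, mul_assoc]
    -- the norm bound function
    have hres : ContinuousAt (resolvent H) z := (spectrum.hasDerivAt_resolvent hz).continuousAt
    have hCc : ContinuousAt C z := by
      apply ContinuousAt.smul (f := fun w => z - w)
        (g := fun w => (1 + (z - w) • resolvent H w) * resolvent H z)
      · exact continuousAt_const.sub continuousAt_id
      · exact ((continuousAt_const.add
          ((continuousAt_const.sub continuousAt_id).smul hres)).mul continuousAt_const)
    have hC0 : C z = 0 := by rw [hC]; simp
    have hCnorm : Filter.Tendsto (fun w => ‖C w‖) (nhds z) (nhds 0) := by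
      have := hCc.tendsto
      rw [hC0] at this
      simpa using this.norm
    have hg : Filter.Tendsto
        (fun w => hsNorm e (sqrtV * resolvent H z) * (‖C w‖ * hsNorm e (resolvent H z * sqrtV)))
        (nhdsWithin z (resolventSet ℂ H \ {z})) (nhds 0) := by
      have h2 : Filter.Tendsto
          (fun w => hsNorm e (sqrtV * resolvent H z) * (‖C w‖ * hsNorm e (resolvent H z * sqrtV)))
          (nhds z) (nhds (hsNorm e (sqrtV * resolvent H z)
            * (0 * hsNorm e (resolvent H z * sqrtV)))) :=
        Filter.Tendsto.const_mul _ (hCnorm.mul_const _)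
      rw [zero_mul, mul_zero] at h2
      exact h2.mono_left nhdsWithin_le_nhds
    apply squeeze_zero' (Filter.Eventually.of_forall fun w => traceNorm_nonneg e _) _ hg
    filter_upwards [self_mem_nhdsWithin] with w hw
    obtain ⟨hwres, hwne⟩ := hw
    have hne : w ≠ z := by simpa using hwne
    rw [hfacQ w hwres hne]
    calc traceNorm e ((sqrtV * resolvent H z) * (C w * (resolvent H z * sqrtV)))
        ≤ hsNorm e (sqrtV * resolvent H z) * hsNorm e (C w * (resolvent H z * sqrtV)) :=
          traceNorm_le_of_fac hA (isHS_comp_left hK (C w)) rfl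
      _ ≤ hsNorm e (sqrtV * resolvent H z) * (‖C w‖ * hsNorm e (resolvent H z * sqrtV)) := by
          exact mul_le_mul_of_nonneg_left (hsNorm_comp_left_le hK (C w)) (hsNorm_nonneg e _)
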